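/- For a three-block Gaussian forward Gibbs sampler, the noise covariance S = Σ − BΣBᵀ factors as S = M_L·M_Lᵀ with the block lower-triangular matrix M_L = [[Q₁₁^{-1/2}, 0, 0], [A₂₁Q₁₁^{-1/2}, Q₂₂^{-1/2}, 0], [(A₃₁ + A₃₂A₂₁)Q₁₁^{-1/2}, A₃₂Q₂₂^{-1/2}, Q₃₃^{-1/2}]], and for any x, y ∈ ℝ^d the solution z = (z₁, z₂, z₃) of the triangular linear system M_L·z = B(x − y) is given explicitly by z₁ = Q₁₁^{1/2}·( A₁₂(x₂ − y₂) + A₁₃(x₃ − y₃) ), z₂ = Q₂₂^{1/2}·A₂₃(x₃ − y₃), and z₃ = 0. (Hence the reflection vector of the joint maximal reflection coupling can be computed by a triangular solve at block-wise cost.) -/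

import Mathlib

open Matrix
open scoped Classical

noncomputable section

/-- The positive semidefinite square root of a positive semidefinite matrix (removed from
Mathlib; restored here with its former definition). -/
noncomputable def Matrix.PosSemidef.sqrt {n 𝕜 : Type*} [Fintype n] [RCLike 𝕜] [PartialOrder 𝕜]
    [DecidableEq n] {A : Matrix n n 𝕜} (hA : Matrix.PosSemidef A) : Matrix n n 𝕜 :=
  hA.1.eigenvectorUnitary.1 * Matrix.diagonal ((↑) ∘ (Real.sqrt ∘ hA.1.eigenvalues)) *
  (star hA.1.eigenvectorUnitary : Matrix n n 𝕜)

lemma psd_sqrt_mul_self {m : Type*} [Fintype m] [DecidableEq m] {A : Matrix m m ℝ}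
    (hA : A.PosSemidef) : hA.sqrt * hA.sqrt = A := by
  unfold Matrix.PosSemidef.sqrt
  have hu : (star hA.1.eigenvectorUnitary : Matrix m m ℝ) * hA.1.eigenvectorUnitary.1 = 1 :=
    Unitary.coe_star_mul_self _
  have hD : Matrix.diagonal ((RCLike.ofReal : ℝ → ℝ) ∘ (Real.sqrt ∘ hA.1.eigenvalues))
      * Matrix.diagonal ((RCLike.ofReal : ℝ → ℝ) ∘ (Real.sqrt ∘ hA.1.eigenvalues))
      = Matrix.diagonal ((RCLike.ofReal : ℝ → ℝ) ∘ hA.1.eigenvalues) := by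
    rw [diagonal_mul_diagonal]; congr 1; funext i
    simp [Real.mul_self_sqrt (hA.eigenvalues_nonneg i)]
  calc _ = hA.1.eigenvectorUnitary.1 * (Matrix.diagonal ((RCLike.ofReal : ℝ → ℝ) ∘ (Real.sqrt ∘ hA.1.eigenvalues))
        * ((star hA.1.eigenvectorUnitary : Matrix m m ℝ) * hA.1.eigenvectorUnitary.1)
        * Matrix.diagonal ((RCLike.ofReal : ℝ → ℝ) ∘ (Real.sqrt ∘ hA.1.eigenvalues)))
        * (star hA.1.eigenvectorUnitary : Matrix m m ℝ) := by simp only [Matrix.mul_assoc]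
    _ = hA.1.eigenvectorUnitary.1 * Matrix.diagonal ((RCLike.ofReal : ℝ → ℝ) ∘ hA.1.eigenvalues)
        * (star hA.1.eigenvectorUnitary : Matrix m m ℝ) := by
      rw [hu, Matrix.mul_one, hD]
    _ = A := by
      conv_rhs => rw [hA.1.spectral_theorem]
      rfl

lemma psd_sqrt_transpose {m : Type*} [Fintype m] [DecidableEq m] {A : Matrix m m ℝ}
    (hA : A.PosSemidef) : hA.sqrtᵀ = hA.sqrt := by
  unfold Matrix.PosSemidef.sqrt
  rw [transpose_mul, transpose_mul, diagonal_transpose, Matrix.mul_assoc]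
  simp [Matrix.star_eq_conjTranspose, Matrix.mul_assoc]

lemma fromRows_add' {R m₁ m₂ n : Type*} [AddCommMonoid R]
    (A₁ B₁ : Matrix m₁ n R) (A₂ B₂ : Matrix m₂ n R) :
    Matrix.fromRows A₁ A₂ + Matrix.fromRows B₁ B₂ = Matrix.fromRows (A₁ + B₁) (A₂ + B₂) := by
  ext (i | i) j <;> simp

lemma gibbs_key {n : Type*} [Fintype n] [DecidableEq n]
    (D Q L U Ninv : Matrix n n ℝ)
    (hQsym : Qᵀ = Q) (hDsym : Dᵀ = D)
    (hQeq : Q = D - D * L - D * U)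
    (hUD : Uᵀ * D = D * L)
    (hQu : IsUnit Q.det) (hDu : IsUnit D.det)
    (hN1 : (1 - L) * Ninv = 1) (hN2 : Ninv * (1 - L) = 1) :
    Q⁻¹ - ((1 - L)⁻¹ * U) * Q⁻¹ * ((1 - L)⁻¹ * U)ᵀ = Ninv * D⁻¹ * Ninvᵀ := by
  have hNinv : (1 - L)⁻¹ = Ninv := inv_eq_right_inv hN1
  have hDi : D * D⁻¹ = 1 := mul_nonsing_inv D hDu
  have hDi' : D⁻¹ * D = 1 := nonsing_inv_mul D hDu
  have hQi : Q * Q⁻¹ = 1 := mul_nonsing_inv Q hQu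
  have hQi' : Q⁻¹ * Q = 1 := nonsing_inv_mul Q hQu
  have hUt : Uᵀ = D * L * D⁻¹ := by rw [← hUD, mul_assoc, hDi, mul_one]
  have hDQ' : D⁻¹ * Q = 1 - L - U := by
    rw [hQeq, mul_sub, mul_sub, ← mul_assoc, ← mul_assoc, hDi', one_mul, one_mul]
  have hN : (1 : Matrix n n ℝ) - L = D⁻¹ * Q + U := by rw [hDQ']; abel
  have hNT : ((1 : Matrix n n ℝ) - L)ᵀ = Q * D⁻¹ + Uᵀ := by
    rw [hN, transpose_add, transpose_mul, hQsym, transpose_nonsing_inv, hDsym]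
  have t1 : D⁻¹ * (Q * D⁻¹) = D⁻¹ - L * D⁻¹ - U * D⁻¹ := by
    rw [← mul_assoc, hDQ', sub_mul, sub_mul, one_mul]
  have t2 : U * Q⁻¹ * (Q * D⁻¹) = U * D⁻¹ := by
    rw [mul_assoc, ← mul_assoc Q⁻¹, hQi', one_mul]
  have t3 : D⁻¹ * Uᵀ = L * D⁻¹ := by
    rw [hUt, ← mul_assoc, ← mul_assoc, hDi', one_mul]
  have h1 : ((1 : Matrix n n ℝ) - L) * Q⁻¹ = D⁻¹ + U * Q⁻¹ := by
    rw [hN, add_mul, mul_assoc, hQi, mul_one]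
  have key : ((1 : Matrix n n ℝ) - L) * Q⁻¹ * ((1 : Matrix n n ℝ) - L)ᵀ
      = D⁻¹ + U * Q⁻¹ * Uᵀ := by
    rw [h1, hNT, add_mul, mul_add, mul_add, t1, t2, t3]
    abel
  have key2 : D⁻¹ = ((1:Matrix n n ℝ) - L) * Q⁻¹ * ((1:Matrix n n ℝ) - L)ᵀ - U * Q⁻¹ * Uᵀ := by
    rw [key]; abel
  have hTT : ((1 : Matrix n n ℝ) - L)ᵀ * Ninvᵀ = 1 := by
    rw [← transpose_mul, hN2, transpose_one]
  rw [hNinv, transpose_mul, key2]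
  have e : Ninv * (((1:Matrix n n ℝ) - L) * Q⁻¹ * ((1:Matrix n n ℝ) - L)ᵀ - U * Q⁻¹ * Uᵀ) * Ninvᵀ
      = (Ninv * ((1:Matrix n n ℝ) - L)) * Q⁻¹ * (((1:Matrix n n ℝ) - L)ᵀ * Ninvᵀ)
        - (Ninv * U) * Q⁻¹ * (Uᵀ * Ninvᵀ) := by noncomm_ring
  rw [e, hN2, hTT, one_mul, mul_one]

/-- three-block Gaussian forward Gibbs: triangular factorization of the
noise covariance and explicit triangular solve for the reflection vector.
The noise covariance `S = Σ − BΣBᵀ` factors as `S = M_L M_Lᵀ` with the explicit block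
lower-triangular `M_L`, and for any `x, y` the vector `z = (z₁, z₂, z₃)` with
`z₁ = Q₁₁^{1/2}(A₁₂(x₂−y₂) + A₁₃(x₃−y₃))`, `z₂ = Q₂₂^{1/2}A₂₃(x₃−y₃)`, `z₃ = 0`
solves `M_L z = B(x − y)`. -/
theorem three_block_gibbs_noise_factorization_and_triangular_solve
    (n₁ n₂ n₃ : ℕ)
    (Q₁₁ : Matrix (Fin n₁) (Fin n₁) ℝ) (Q₁₂ : Matrix (Fin n₁) (Fin n₂) ℝ)
    (Q₁₃ : Matrix (Fin n₁) (Fin n₃) ℝ) (Q₂₂ : Matrix (Fin n₂) (Fin n₂) ℝ)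
    (Q₂₃ : Matrix (Fin n₂) (Fin n₃) ℝ) (Q₃₃ : Matrix (Fin n₃) (Fin n₃) ℝ)
    (Q : Matrix (Fin n₁ ⊕ (Fin n₂ ⊕ Fin n₃)) (Fin n₁ ⊕ (Fin n₂ ⊕ Fin n₃)) ℝ)
    (hQdef : Q = Matrix.fromBlocks Q₁₁ (Matrix.fromCols Q₁₂ Q₁₃)
        (Matrix.fromRows Q₁₂ᵀ Q₁₃ᵀ) (Matrix.fromBlocks Q₂₂ Q₂₃ Q₂₃ᵀ Q₃₃))
    (hQ : Q.PosDef)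
    (h11 : Q₁₁.PosDef) (h22 : Q₂₂.PosDef) (h33 : Q₃₃.PosDef)
    (A₁₂ : Matrix (Fin n₁) (Fin n₂) ℝ) (hA12 : A₁₂ = -(Q₁₁⁻¹ * Q₁₂))
    (A₁₃ : Matrix (Fin n₁) (Fin n₃) ℝ) (hA13 : A₁₃ = -(Q₁₁⁻¹ * Q₁₃))
    (A₂₁ : Matrix (Fin n₂) (Fin n₁) ℝ) (hA21 : A₂₁ = -(Q₂₂⁻¹ * Q₁₂ᵀ))
    (A₂₃ : Matrix (Fin n₂) (Fin n₃) ℝ) (hA23 : A₂₃ = -(Q₂₂⁻¹ * Q₂₃))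
    (A₃₁ : Matrix (Fin n₃) (Fin n₁) ℝ) (hA31 : A₃₁ = -(Q₃₃⁻¹ * Q₁₃ᵀ))
    (A₃₂ : Matrix (Fin n₃) (Fin n₂) ℝ) (hA32 : A₃₂ = -(Q₃₃⁻¹ * Q₂₃ᵀ))
    (B : Matrix (Fin n₁ ⊕ (Fin n₂ ⊕ Fin n₃)) (Fin n₁ ⊕ (Fin n₂ ⊕ Fin n₃)) ℝ)
    (hB : B = (1 - Matrix.fromBlocks 0 0 (Matrix.fromRows A₂₁ A₃₁)
          (Matrix.fromBlocks 0 0 A₃₂ 0))⁻¹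
        * Matrix.fromBlocks 0 (Matrix.fromCols A₁₂ A₁₃) 0
          (Matrix.fromBlocks 0 A₂₃ 0 0))
    (ML : Matrix (Fin n₁ ⊕ (Fin n₂ ⊕ Fin n₃)) (Fin n₁ ⊕ (Fin n₂ ⊕ Fin n₃)) ℝ)
    (hML : ML = Matrix.fromBlocks (h11.posSemidef.sqrt)⁻¹ 0
        (Matrix.fromRows (A₂₁ * (h11.posSemidef.sqrt)⁻¹)
          ((A₃₁ + A₃₂ * A₂₁) * (h11.posSemidef.sqrt)⁻¹))
        (Matrix.fromBlocks (h22.posSemidef.sqrt)⁻¹ 0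
          (A₃₂ * (h22.posSemidef.sqrt)⁻¹) (h33.posSemidef.sqrt)⁻¹)) :
    Q⁻¹ - B * Q⁻¹ * Bᵀ = ML * MLᵀ
    ∧ ∀ x y : Fin n₁ ⊕ (Fin n₂ ⊕ Fin n₃) → ℝ,
        ML.mulVec
          (Sum.elim
            (h11.posSemidef.sqrt.mulVec
              (A₁₂.mulVec (fun i => (x - y) (Sum.inr (Sum.inl i)))
                + A₁₃.mulVec (fun i => (x - y) (Sum.inr (Sum.inr i)))))
            (Sum.elim
              (h22.posSemidef.sqrt.mulVec
                (A₂₃.mulVec (fun i => (x - y) (Sum.inr (Sum.inr i)))))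
              0))
        = B.mulVec (x - y) := by
  -- abbreviations for the square roots
  set R1 := h11.posSemidef.sqrt with hR1def
  set R2 := h22.posSemidef.sqrt with hR2def
  set R3 := h33.posSemidef.sqrt with hR3def
  -- invertibility of the diagonal blocks
  have hQ11u : IsUnit Q₁₁.det := isUnit_iff_ne_zero.mpr h11.det_pos.ne'
  have hQ22u : IsUnit Q₂₂.det := isUnit_iff_ne_zero.mpr h22.det_pos.ne'
  have hQ33u : IsUnit Q₃₃.det := isUnit_iff_ne_zero.mpr h33.det_pos.ne'
  have hQu : IsUnit Q.det := isUnit_iff_ne_zero.mpr hQ.det_pos.ne'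
  -- symmetry of the blocks
  have hQsym : Qᵀ = Q := by
    have := hQ.isHermitian
    rwa [Matrix.IsHermitian, conjTranspose_eq_transpose_of_trivial] at this
  have hQ11sym : Q₁₁ᵀ = Q₁₁ := by
    have := h11.isHermitian
    rwa [Matrix.IsHermitian, conjTranspose_eq_transpose_of_trivial] at this
  have hQ22sym : Q₂₂ᵀ = Q₂₂ := by
    have := h22.isHermitian
    rwa [Matrix.IsHermitian, conjTranspose_eq_transpose_of_trivial] at this
  have hQ33sym : Q₃₃ᵀ = Q₃₃ := by
    have := h33.isHermitian
    rwa [Matrix.IsHermitian, conjTranspose_eq_transpose_of_trivial] at this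
  -- square root facts
  have hR1m : R1 * R1 = Q₁₁ := psd_sqrt_mul_self h11.posSemidef
  have hR2m : R2 * R2 = Q₂₂ := psd_sqrt_mul_self h22.posSemidef
  have hR3m : R3 * R3 = Q₃₃ := psd_sqrt_mul_self h33.posSemidef
  have hR1sym : R1ᵀ = R1 := by
    exact psd_sqrt_transpose h11.posSemidef
  have hR2sym : R2ᵀ = R2 := by
    exact psd_sqrt_transpose h22.posSemidef
  have hR3sym : R3ᵀ = R3 := by
    exact psd_sqrt_transpose h33.posSemidef
  have hR1u : IsUnit R1.det := by
    refine isUnit_iff_ne_zero.mpr fun h0 => h11.det_pos.ne' ?_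
    rw [← hR1m, det_mul, h0, mul_zero]
  have hR2u : IsUnit R2.det := by
    refine isUnit_iff_ne_zero.mpr fun h0 => h22.det_pos.ne' ?_
    rw [← hR2m, det_mul, h0, mul_zero]
  have hR3u : IsUnit R3.det := by
    refine isUnit_iff_ne_zero.mpr fun h0 => h33.det_pos.ne' ?_
    rw [← hR3m, det_mul, h0, mul_zero]
  have hR1i : R1⁻¹ * R1 = 1 := nonsing_inv_mul _ hR1u
  have hR2i : R2⁻¹ * R2 = 1 := nonsing_inv_mul _ hR2u
  have hR1iT : (R1⁻¹)ᵀ = R1⁻¹ := by rw [transpose_nonsing_inv, hR1sym]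
  have hR2iT : (R2⁻¹)ᵀ = R2⁻¹ := by rw [transpose_nonsing_inv, hR2sym]
  have hR3iT : (R3⁻¹)ᵀ = R3⁻¹ := by rw [transpose_nonsing_inv, hR3sym]
  have hR1Q : R1⁻¹ * R1⁻¹ = Q₁₁⁻¹ := by rw [← hR1m, Matrix.mul_inv_rev]
  have hR2Q : R2⁻¹ * R2⁻¹ = Q₂₂⁻¹ := by rw [← hR2m, Matrix.mul_inv_rev]
  have hR3Q : R3⁻¹ * R3⁻¹ = Q₃₃⁻¹ := by rw [← hR3m, Matrix.mul_inv_rev]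
  -- products of diagonal blocks with A-blocks
  have hQA12 : Q₁₁ * A₁₂ = -Q₁₂ := by
    rw [hA12, Matrix.mul_neg, ← Matrix.mul_assoc, mul_nonsing_inv _ hQ11u, Matrix.one_mul]
  have hQA13 : Q₁₁ * A₁₃ = -Q₁₃ := by
    rw [hA13, Matrix.mul_neg, ← Matrix.mul_assoc, mul_nonsing_inv _ hQ11u, Matrix.one_mul]
  have hQA21 : Q₂₂ * A₂₁ = -Q₁₂ᵀ := by
    rw [hA21, Matrix.mul_neg, ← Matrix.mul_assoc, mul_nonsing_inv _ hQ22u, Matrix.one_mul]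
  have hQA23 : Q₂₂ * A₂₃ = -Q₂₃ := by
    rw [hA23, Matrix.mul_neg, ← Matrix.mul_assoc, mul_nonsing_inv _ hQ22u, Matrix.one_mul]
  have hQA31 : Q₃₃ * A₃₁ = -Q₁₃ᵀ := by
    rw [hA31, Matrix.mul_neg, ← Matrix.mul_assoc, mul_nonsing_inv _ hQ33u, Matrix.one_mul]
  have hQA32 : Q₃₃ * A₃₂ = -Q₂₃ᵀ := by
    rw [hA32, Matrix.mul_neg, ← Matrix.mul_assoc, mul_nonsing_inv _ hQ33u, Matrix.one_mul]
  have hA12T : A₁₂ᵀ * Q₁₁ = -Q₁₂ᵀ := by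
    rw [hA12, transpose_neg, transpose_mul, transpose_nonsing_inv, hQ11sym, Matrix.neg_mul,
      Matrix.mul_assoc, nonsing_inv_mul _ hQ11u, Matrix.mul_one]
  have hA13T : A₁₃ᵀ * Q₁₁ = -Q₁₃ᵀ := by
    rw [hA13, transpose_neg, transpose_mul, transpose_nonsing_inv, hQ11sym, Matrix.neg_mul,
      Matrix.mul_assoc, nonsing_inv_mul _ hQ11u, Matrix.mul_one]
  have hA23T : A₂₃ᵀ * Q₂₂ = -Q₂₃ᵀ := by
    rw [hA23, transpose_neg, transpose_mul, transpose_nonsing_inv, hQ22sym, Matrix.neg_mul,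
      Matrix.mul_assoc, nonsing_inv_mul _ hQ22u, Matrix.mul_one]
  -- the block matrices
  set L : Matrix (Fin n₁ ⊕ (Fin n₂ ⊕ Fin n₃)) (Fin n₁ ⊕ (Fin n₂ ⊕ Fin n₃)) ℝ :=
    Matrix.fromBlocks 0 0 (Matrix.fromRows A₂₁ A₃₁) (Matrix.fromBlocks 0 0 A₃₂ 0) with hLdef
  set U : Matrix (Fin n₁ ⊕ (Fin n₂ ⊕ Fin n₃)) (Fin n₁ ⊕ (Fin n₂ ⊕ Fin n₃)) ℝ :=
    Matrix.fromBlocks 0 (Matrix.fromCols A₁₂ A₁₃) 0 (Matrix.fromBlocks 0 A₂₃ 0 0) with hUdef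
  set D : Matrix (Fin n₁ ⊕ (Fin n₂ ⊕ Fin n₃)) (Fin n₁ ⊕ (Fin n₂ ⊕ Fin n₃)) ℝ :=
    Matrix.fromBlocks Q₁₁ 0 0 (Matrix.fromBlocks Q₂₂ 0 0 Q₃₃) with hDdef
  set Ninv : Matrix (Fin n₁ ⊕ (Fin n₂ ⊕ Fin n₃)) (Fin n₁ ⊕ (Fin n₂ ⊕ Fin n₃)) ℝ :=
    Matrix.fromBlocks 1 0 (Matrix.fromRows A₂₁ (A₃₁ + A₃₂ * A₂₁))
      (Matrix.fromBlocks 1 0 A₃₂ 1) with hNinvdef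
  set Rinv : Matrix (Fin n₁ ⊕ (Fin n₂ ⊕ Fin n₃)) (Fin n₁ ⊕ (Fin n₂ ⊕ Fin n₃)) ℝ :=
    Matrix.fromBlocks R1⁻¹ 0 0 (Matrix.fromBlocks R2⁻¹ 0 0 R3⁻¹) with hRinvdef
  -- 1 - L in block form
  have h1L : (1 : Matrix (Fin n₁ ⊕ (Fin n₂ ⊕ Fin n₃)) (Fin n₁ ⊕ (Fin n₂ ⊕ Fin n₃)) ℝ) - L
      = Matrix.fromBlocks 1 0 (Matrix.fromRows (-A₂₁) (-A₃₁))
          (Matrix.fromBlocks 1 0 (-A₃₂) 1) := by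
    rw [hLdef]
    ext (i | i | i) (j | j | j) <;>
      simp [Matrix.one_apply]
  -- (1 - L) * Ninv = 1
  have hNNinv : ((1 : Matrix (Fin n₁ ⊕ (Fin n₂ ⊕ Fin n₃)) (Fin n₁ ⊕ (Fin n₂ ⊕ Fin n₃)) ℝ) - L)
      * Ninv = 1 := by
    rw [h1L, hNinvdef, fromBlocks_multiply, ← fromBlocks_one]
    refine fromBlocks_inj.mpr ⟨by simp, by simp, ?_, ?_⟩
    · simp only [fromBlocks_mul_fromRows, fromRows_mul, fromRows_add', Matrix.neg_mul,
        Matrix.one_mul, Matrix.mul_one, Matrix.zero_mul, Matrix.mul_zero, add_zero, zero_add]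
      ext (i | i) j <;> simp <;> abel
    · simp only [fromBlocks_multiply, Matrix.neg_mul, Matrix.one_mul, Matrix.mul_one,
        Matrix.zero_mul, Matrix.mul_zero, add_zero, zero_add]
      ext (i | i) (j | j) <;> simp [Matrix.fromBlocks, Matrix.one_apply] <;> abel
  have hNinvN : Ninv *
      ((1 : Matrix (Fin n₁ ⊕ (Fin n₂ ⊕ Fin n₃)) (Fin n₁ ⊕ (Fin n₂ ⊕ Fin n₃)) ℝ) - L) = 1 := by
    rw [h1L, hNinvdef, fromBlocks_multiply, ← fromBlocks_one]
    refine fromBlocks_inj.mpr ⟨by simp, by simp, ?_, ?_⟩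
    · simp only [fromBlocks_mul_fromRows, fromRows_mul, fromRows_add', Matrix.mul_neg,
        Matrix.one_mul, Matrix.mul_one, Matrix.zero_mul, Matrix.mul_zero, add_zero, zero_add]
      ext (i | i) j <;> simp <;> abel
    · simp only [fromBlocks_multiply, Matrix.mul_neg, Matrix.one_mul, Matrix.mul_one,
        Matrix.zero_mul, Matrix.mul_zero, add_zero, zero_add]
      ext (i | i) (j | j) <;> simp [Matrix.fromBlocks, Matrix.one_apply] <;> abel
  -- Q = D - D * L - D * U
  have hQeq : Q = D - D * L - D * U := by
    rw [hQdef, hDdef, hLdef, hUdef, fromBlocks_multiply, fromBlocks_multiply]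
    simp only [fromBlocks_mul_fromRows, mul_fromCols, fromBlocks_multiply,
      Matrix.mul_zero, Matrix.zero_mul, add_zero, zero_add, Matrix.mul_one, Matrix.one_mul,
      hQA12, hQA13, hQA21, hQA23, hQA31, hQA32]
    ext (i | i | i) (j | j | j) <;>
      simp <;> abel
  -- Uᵀ * D = D * L
  have hUD : Uᵀ * D = D * L := by
    rw [hUdef, hDdef, hLdef, fromBlocks_transpose, transpose_fromCols, fromBlocks_transpose,
      fromBlocks_multiply, fromBlocks_multiply]
    simp only [fromRows_mul, fromBlocks_multiply, fromBlocks_mul_fromRows,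
      Matrix.mul_zero, Matrix.zero_mul, add_zero, zero_add, Matrix.mul_one, Matrix.one_mul,
      transpose_zero, hA12T, hA13T, hA23T, hQA21, hQA23, hQA31, hQA32]
  -- Dᵀ = D
  have hDsym : Dᵀ = D := by
    rw [hDdef, fromBlocks_transpose, fromBlocks_transpose, hQ11sym, hQ22sym, hQ33sym]
    simp
  -- D is invertible, with explicit inverse
  have hDu : IsUnit D.det := by
    rw [hDdef, det_fromBlocks_zero₂₁, det_fromBlocks_zero₂₁]
    exact hQ11u.mul (hQ22u.mul hQ33u)
  -- explicit inverse of D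
  have hDinv : D⁻¹ = Matrix.fromBlocks Q₁₁⁻¹ 0 0 (Matrix.fromBlocks Q₂₂⁻¹ 0 0 Q₃₃⁻¹) := by
    refine inv_eq_right_inv ?_
    rw [hDdef, fromBlocks_multiply, fromBlocks_multiply]
    simp only [Matrix.mul_zero, Matrix.zero_mul, add_zero, zero_add,
      mul_nonsing_inv _ hQ11u, mul_nonsing_inv _ hQ22u, mul_nonsing_inv _ hQ33u,
      fromBlocks_one]
  have hRinvT : Rinvᵀ = Rinv := by
    rw [hRinvdef, fromBlocks_transpose, fromBlocks_transpose, hR1iT, hR2iT, hR3iT]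
    simp
  have hRR : Rinv * Rinvᵀ = D⁻¹ := by
    rw [hRinvT, hRinvdef, fromBlocks_multiply, fromBlocks_multiply, hDinv]
    simp only [Matrix.mul_zero, Matrix.zero_mul, add_zero, zero_add, hR1Q, hR2Q, hR3Q]
  have hML2 : ML = Ninv * Rinv := by
    rw [hML, hNinvdef, hRinvdef, fromBlocks_multiply, fromBlocks_multiply]
    simp only [Matrix.mul_zero, Matrix.zero_mul, add_zero, zero_add, Matrix.one_mul,
      Matrix.mul_one, fromRows_mul]
  have hkey := gibbs_key D Q L U Ninv hQsym hDsym hQeq hUD hQu hDu hNNinv hNinvN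
  constructor
  · rw [hB, hML2]
    calc Q⁻¹ - (1 - L)⁻¹ * U * Q⁻¹ * ((1 - L)⁻¹ * U)ᵀ = Ninv * D⁻¹ * Ninvᵀ := hkey
      _ = Ninv * (Rinv * Rinvᵀ) * Ninvᵀ := by rw [hRR]
      _ = (Ninv * Rinv) * (Ninv * Rinv)ᵀ := by rw [transpose_mul]; noncomm_ring
  · intro x y
    have hNinveq : (1 - L)⁻¹ = Ninv := inv_eq_right_inv hNNinv
    rw [hB, hNinveq, hML2, ← Matrix.mulVec_mulVec, ← Matrix.mulVec_mulVec]
    have hd : (x - y) = Sum.elim (fun i => (x - y) (Sum.inl i))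
        (Sum.elim (fun i => (x - y) (Sum.inr (Sum.inl i)))
          (fun i => (x - y) (Sum.inr (Sum.inr i)))) := by
      ext (i | i | i) <;> rfl
    conv_rhs => rw [hd]
    rw [hUdef, hRinvdef]
    simp only [fromBlocks_mulVec, fromCols_mulVec_sumElim, Matrix.zero_mulVec,
      Matrix.mulVec_zero, add_zero, zero_add, Matrix.mulVec_mulVec, hR1i, hR2i,
      Matrix.one_mulVec, Sum.elim_comp_inl, Sum.elim_comp_inr]
    simp only [Matrix.zero_mul, Matrix.zero_mulVec, ← Matrix.mul_assoc, hR2i,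
      Matrix.one_mul, add_zero, zero_add]

end
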